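/- Let p be a prime and let S be a commutative ring that is p-adically complete (complete and separated for the topology defined by the powers of the ideal pS). Let 𝔞 ⊆ S be an ideal such that 𝔞^N ⊆ pS for some N ≥ 1, and set R := S/𝔞. Let 𝒥 := ker(W(S) → S → R), i.e. 𝒥 = { x ∈ W(S) : the zeroth Witt component x₀ of x lies in 𝔞 }, where W(S) → S is the zeroth ghost/component map. Then 𝒥 + pW(S) is contained in the Jacobson radical of W(S). -/

import Mathlib

open WittVector

section Aux

variable {p : ℕ} [hp : Fact p.Prime] {S : Type*} [CommRing S]

private lemma aux_exists_versch (z : WittVector p S) (h : z.coeff 0 = 0) :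
    ∃ w : WittVector p S, verschiebung w = z := by
  refine ⟨WittVector.mk p (fun n => z.coeff (n + 1)), ?_⟩
  ext n
  cases n with
  | zero => rw [verschiebung_coeff_zero, h]
  | succ n => rw [verschiebung_coeff_succ, WittVector.coeff_mk]

private lemma aux_truncate_unit (hpj : (p : S) ∈ (⊥ : Ideal S).jacobson) :
    ∀ (n : ℕ) (x : WittVector p S), IsUnit (x.coeff 0) →
      ∃ y : WittVector p S, WittVector.truncate n (x * y) = 1 := by
  intro n
  induction n with
  | zero =>
    intro x _
    refine ⟨1, ?_⟩
    apply TruncatedWittVector.ext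
    intro i
    exact i.elim0
  | succ n ih =>
    intro x hx
    obtain ⟨u, hu⟩ := hx
    set t : WittVector p S := teichmuller p ((u⁻¹ : Sˣ) : S) with ht
    have h0 : (x * t - 1).coeff 0 = 0 := by
      have h1 : (x * t).coeff 0 = 1 := by
        have := WittVector.mul_coeff_zero x t
        rw [this, ht, teichmuller_coeff_zero, ← hu, ← Units.val_mul, mul_inv_cancel,
          Units.val_one]
      have h2 : (WittVector.constantCoeff : WittVector p S →+* S) (x * t - 1) = 0 := by
        rw [map_sub, map_one, WittVector.constantCoeff_apply, h1, sub_self]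
      rwa [WittVector.constantCoeff_apply] at h2
    obtain ⟨w, hw⟩ := aux_exists_versch (x * t - 1) h0
    have hxt : x * t = 1 + verschiebung w := by rw [hw]; ring
    have hpw0 : IsUnit ((1 + (p : WittVector p S) * w).coeff 0) := by
      have h1 : (1 + (p : WittVector p S) * w).coeff 0
          = (p : S) * w.coeff 0 + 1 := by
        have := WittVector.add_coeff_zero (1 : WittVector p S) ((p : WittVector p S) * w)
        rw [this, WittVector.one_coeff_zero, WittVector.mul_coeff_zero]
        have hpc : ((p : WittVector p S)).coeff 0 = (p : S) := by
          have h := map_natCast (WittVector.constantCoeff : WittVector p S →+* S) p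
          rwa [WittVector.constantCoeff_apply] at h
        rw [hpc]; ring
      rw [h1]
      exact Ideal.mem_jacobson_bot.1 hpj (w.coeff 0)
    obtain ⟨y, hy⟩ := ih (1 + (p : WittVector p S) * w) hpw0
    set e : WittVector p S := (1 + (p : WittVector p S) * w) * y - 1 with he
    have hetrunc : WittVector.truncate n e = 0 := by
      rw [he, map_sub, hy, map_one, sub_self]
    refine ⟨t * (1 - verschiebung (w * y)), ?_⟩
    have key : x * (t * (1 - verschiebung (w * y))) = 1 - verschiebung (w * e) := by
      have hVV : verschiebung w * verschiebung (w * y)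
          = verschiebung (w * ((w * y) * (p : WittVector p S))) := by
        rw [← verschiebung_mul_frobenius, frobenius_verschiebung]
      have : x * (t * (1 - verschiebung (w * y)))
          = (1 + verschiebung w) * (1 - verschiebung (w * y)) := by
        rw [← mul_assoc, hxt]
      rw [this]
      have expand : (1 + verschiebung w) * (1 - verschiebung (w * y))
          = 1 + (verschiebung w - verschiebung (w * y)
              - verschiebung w * verschiebung (w * y)) := by ring
      rw [expand, hVV, ← map_sub, ← map_sub]
      have harg : w - w * y - w * ((w * y) * (p : WittVector p S)) = -(w * e) := by
        rw [he]; ring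
      rw [harg, map_neg]
      ring
    rw [key, map_sub, map_one]
    have : WittVector.truncate (n + 1) (verschiebung (w * e)) = 0 := by
      have hmem : verschiebung (w * e)
          ∈ RingHom.ker (WittVector.truncate (p := p) (R := S) (n + 1)) := by
        rw [WittVector.mem_ker_truncate]
        intro i hi
        cases i with
        | zero => exact verschiebung_coeff_zero _
        | succ i =>
          rw [verschiebung_coeff_succ]
          have hie : (w * e).coeff i = 0 := by
            have hwe : w * e ∈ RingHom.ker (WittVector.truncate (p := p) (R := S) n) := by
              rw [RingHom.mem_ker, map_mul, hetrunc, mul_zero]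
            exact (WittVector.mem_ker_truncate _ _).1 hwe i (by omega)
          exact hie
      rwa [RingHom.mem_ker] at hmem
    rw [this, sub_zero]

private lemma aux_isUnit (hpj : (p : S) ∈ (⊥ : Ideal S).jacobson)
    (x : WittVector p S) (hx : IsUnit (x.coeff 0)) : IsUnit x := by
  choose y hy using fun n => aux_truncate_unit hpj n x hx
  set z : WittVector p S := WittVector.mk p (fun i => (y (i + 1)).coeff i) with hz
  have hinv : ∀ (m k : ℕ), k + 1 ≤ m + 1 →
      WittVector.truncate (k + 1) (y (k + 1)) = WittVector.truncate (k + 1) (y (m + 1)) := by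
    intro m k hkm
    have h1 : WittVector.truncate (k + 1) (x * y (k + 1)) = 1 := hy (k + 1)
    have h2 : WittVector.truncate (k + 1) (x * y (m + 1)) = 1 := by
      have := congrArg (TruncatedWittVector.truncate (p := p) (R := S) hkm) (hy (m + 1))
      rwa [TruncatedWittVector.truncate_wittVector_truncate, map_one] at this
    have hb : WittVector.truncate (k + 1) x * WittVector.truncate (k + 1) (y (k + 1)) = 1 := by
      rw [← map_mul]; exact h1
    have hc : WittVector.truncate (k + 1) x * WittVector.truncate (k + 1) (y (m + 1)) = 1 := by
      rw [← map_mul]; exact h2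
    calc WittVector.truncate (k + 1) (y (k + 1))
        = WittVector.truncate (k + 1) (y (k + 1))
            * (WittVector.truncate (k + 1) x * WittVector.truncate (k + 1) (y (m + 1))) := by
          rw [hc, mul_one]
      _ = (WittVector.truncate (k + 1) x * WittVector.truncate (k + 1) (y (k + 1)))
            * WittVector.truncate (k + 1) (y (m + 1)) := by ring
      _ = WittVector.truncate (k + 1) (y (m + 1)) := by rw [hb, one_mul]
  have hzy : ∀ i : ℕ, WittVector.truncate (i + 1) z = WittVector.truncate (i + 1) (y (i + 1)) := by
    intro i
    apply TruncatedWittVector.ext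
    intro j
    rw [WittVector.coeff_truncate, WittVector.coeff_truncate, hz, WittVector.coeff_mk]
    have hj : (j : ℕ) + 1 ≤ i + 1 := by omega
    have := congrArg (fun v => TruncatedWittVector.coeff (⟨(j : ℕ), by omega⟩ : Fin ((j : ℕ) + 1)) v)
      (hinv i (j : ℕ) hj)
    simpa [WittVector.coeff_truncate] using this
  have hxz : x * z = 1 := by
    ext i
    have h1 : WittVector.truncate (i + 1) (x * z) = 1 := by
      rw [map_mul, hzy i, ← map_mul]
      exact hy (i + 1)
    have h2 := congrArg
      (fun v => TruncatedWittVector.coeff (⟨i, by omega⟩ : Fin (i + 1)) v) h1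
    simp only [WittVector.coeff_truncate] at h2
    rw [h2]
    have h3 : (WittVector.truncate (i + 1) (1 : WittVector p S)) = 1 := map_one _
    have h4 := congrArg
      (fun v => TruncatedWittVector.coeff (⟨i, by omega⟩ : Fin (i + 1)) v) h3
    simp only [WittVector.coeff_truncate] at h4
    rw [← h4]
  exact IsUnit.of_mul_eq_one z hxz

private lemma aux_one_add_isUnit (𝔞 : Ideal S) (N : ℕ)
    (h𝔞 : 𝔞 ^ N ≤ Ideal.span {(p : S)})
    (hpj : Ideal.span {(p : S)} ≤ (⊥ : Ideal S).jacobson)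
    {a : S} (ha : a ∈ 𝔞 ⊔ Ideal.span {(p : S)}) : IsUnit (1 + a) := by
  obtain ⟨b, hb, c, hc, rfl⟩ := Submodule.mem_sup.1 ha
  have hdvd : c ∣ (b + c) ^ N - b ^ N := by
    have := sub_dvd_pow_sub_pow (b + c) b N
    simpa using this
  obtain ⟨d, hd⟩ := hdvd
  have hpowmem : (b + c) ^ N ∈ Ideal.span {(p : S)} := by
    have h1 : b ^ N ∈ Ideal.span {(p : S)} := h𝔞 (Ideal.pow_mem_pow hb N)
    have h2 : c * d ∈ Ideal.span {(p : S)} := Ideal.mul_mem_right d _ hc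
    have h3 : (b + c) ^ N = b ^ N + c * d := by linear_combination hd
    rw [h3]; exact Ideal.add_mem _ h1 h2
  set a : S := b + c
  set m : S := -a with hm
  have hmN : m ^ N ∈ Ideal.span {(p : S)} := by
    have h : m ^ N = (-1) ^ N * a ^ N := by rw [hm, neg_pow]
    rw [h]
    exact Ideal.mul_mem_left _ _ hpowmem
  have hu1 : IsUnit (1 - m ^ N) := by
    have hj : -(m ^ N) ∈ (⊥ : Ideal S).jacobson := hpj (neg_mem hmN)
    have := Ideal.mem_jacobson_bot.1 hj 1
    have heq : -(m ^ N) * 1 + 1 = 1 - m ^ N := by ring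
    rwa [heq] at this
  have hgeo : (1 + a) * (∑ i ∈ Finset.range N, m ^ i) = 1 - m ^ N := by
    have h := geom_sum_mul m N
    linear_combination -h
  exact isUnit_of_mul_isUnit_left (hgeo ▸ hu1)

end Aux

/-- Let `p` be a prime and `S` a `p`-adically complete commutative ring.
Let `𝔞 ⊆ S` be an ideal with `𝔞^N ⊆ pS` for some `N ≥ 1` and set `R = S/𝔞`.  Let
`𝒥 = ker(W(S) → S → R)` (the Witt vectors whose zeroth component lies in `𝔞`).  Then
`𝒥 + p·W(S)` is contained in the Jacobson radical of `W(S)`. -/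
theorem statement9 (p : ℕ) [hp : Fact p.Prime]
    (S : Type*) [CommRing S]
    [IsAdicComplete (Ideal.span {(p : S)}) S]
    (𝔞 : Ideal S) (N : ℕ) (hN : 1 ≤ N) (h𝔞 : 𝔞 ^ N ≤ Ideal.span {(p : S)}) :
    RingHom.ker ((Ideal.Quotient.mk 𝔞).comp (constantCoeff : WittVector p S →+* S))
        ⊔ Ideal.span {(p : WittVector p S)}
      ≤ (⊥ : Ideal (WittVector p S)).jacobson := by
  have hpjle : Ideal.span {(p : S)} ≤ (⊥ : Ideal S).jacobson :=
    IsAdicComplete.le_jacobson_bot (Ideal.span {(p : S)})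
  have hpj : (p : S) ∈ (⊥ : Ideal S).jacobson :=
    hpjle (Ideal.subset_span rfl)
  intro x hx
  have hcoeff : x.coeff 0 ∈ 𝔞 ⊔ Ideal.span {(p : S)} := by
    have hle : RingHom.ker ((Ideal.Quotient.mk 𝔞).comp
          (constantCoeff : WittVector p S →+* S))
          ⊔ Ideal.span {(p : WittVector p S)}
        ≤ Ideal.comap (constantCoeff : WittVector p S →+* S)
            (𝔞 ⊔ Ideal.span {(p : S)}) := by
      apply sup_le
      · intro z hz
        rw [RingHom.mem_ker, RingHom.comp_apply] at hz
        have : (constantCoeff : WittVector p S →+* S) z ∈ 𝔞 :=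
          Ideal.Quotient.eq_zero_iff_mem.1 hz
        exact Ideal.mem_comap.2 (le_sup_left (α := Ideal S) this)
      · rw [Ideal.span_le]
        intro z hz
        rw [Set.mem_singleton_iff] at hz
        subst hz
        have : (constantCoeff : WittVector p S →+* S) (p : WittVector p S) = (p : S) :=
          map_natCast _ p
        rw [SetLike.mem_coe, Ideal.mem_comap, this]
        exact le_sup_right (α := Ideal S) (Ideal.subset_span rfl)
    have := hle hx
    rwa [Ideal.mem_comap] at this
  rw [Ideal.mem_jacobson_bot]
  intro y
  apply aux_isUnit hpj
  have hc0 : (x * y + 1).coeff 0 = 1 + x.coeff 0 * y.coeff 0 := by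
    rw [WittVector.add_coeff_zero, WittVector.mul_coeff_zero, WittVector.one_coeff_zero]
    ring
  rw [hc0]
  exact aux_one_add_isUnit 𝔞 N h𝔞 hpjle
    (Ideal.mul_mem_right (y.coeff 0) _ hcoeff)
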